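/- Let G be a linear algebraic group over a field F, H a closed subgroup, V a rational representation of G, and L ⊆ V a line whose stabilizer in G is exactly H. Suppose W is a rational representation of G such that the dual character of H acting on L occurs as an H-subrepresentation of W, spanned by a vector ℓ'. Then for any nonzero ℓ ∈ L, the stabilizer in G of the vector ℓ ⊗ ℓ' ∈ V ⊗ W is exactly H. -/
import Mathlib


open scoped TensorProduct

/-- `σ` is (isomorphic to) a subrepresentation of `ρ`: it embeds `H`-equivariantly. -/
def IsSubrep (F : Type) [Field F] {H W V : Type} [Group H]
    [AddCommGroup W] [Module F W] [AddCommGroup V] [Module F V]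
    (σ : Representation F H W) (ρ : Representation F H V) : Prop :=
  ∃ f : W →ₗ[F] V, Function.Injective f ∧ ∀ (h : H) (w : W), f (σ h w) = ρ h (f w)

/-- `H` is observable in `G`: every finite-dimensional rational representation of `H`
(modelled on `Fin m → F`) embeds into the restriction to `H` of a representation of `G`. -/
def Observable (F : Type) [Field F] (G : Type) [Group G] (H : Subgroup G) : Prop :=
  ∀ (m : ℕ) (σ : Representation F H (Fin m → F)),
    ∃ (n : ℕ) (ρ : Representation F G (Fin n → F)), IsSubrep F σ (ρ.comp H.subtype)

/-- The character `χ` of `H` occurs in (the restriction to `H` of) a representation of `G`. -/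
def CharOccurs (F : Type) [Field F] (G : Type) [Group G] (H : Subgroup G) (χ : H →* Fˣ) : Prop :=
  ∃ (n : ℕ) (ρ : Representation F G (Fin n → F)) (v : Fin n → F),
    v ≠ 0 ∧ ∀ h : H, ρ (h : G) v = (χ h : F) • v

/-- if `H` is exactly the stabilizer of the line `F·ℓ` in `V`, acting on it by
the character `χ`, and `ℓ' ∈ W` realizes the dual character `χ⁻¹` of `H`, then `H` is exactly
the isotropy group of the vector `ℓ ⊗ ℓ' ∈ V ⊗ W`. -/
theorem stabilizer_of_tensor_vector (F : Type) [Field F] {G : Type} [Group G] (H : Subgroup G)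
    {V W : Type} [AddCommGroup V] [Module F V] [AddCommGroup W] [Module F W]
    (ρV : Representation F G V) (ρW : Representation F G W)
    (ℓ : V) (hℓ : ℓ ≠ 0)
    (hH : ∀ g : G, g ∈ H ↔ ∃ c : Fˣ, ρV g ℓ = (c : F) • ℓ)
    (χ : H →* Fˣ) (hχ : ∀ h : H, ρV (h : G) ℓ = (χ h : F) • ℓ)
    (ℓ' : W) (hℓ' : ℓ' ≠ 0)
    (hχ' : ∀ h : H, ρW (h : G) ℓ' = (((χ h)⁻¹ : Fˣ) : F) • ℓ') :
    ∀ g : G, TensorProduct.map (ρV g) (ρW g) (ℓ ⊗ₜ[F] ℓ') = ℓ ⊗ₜ[F] ℓ' ↔ g ∈ H := by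
  intro g
  constructor
  · intro hg
    -- get a functional f on W with f ℓ' = 1
    have : ¬ ∀ φ : Module.Dual F W, φ ℓ' = 0 := by
      rw [Module.forall_dual_apply_eq_zero_iff F ℓ']; exact hℓ'
    obtain ⟨f0, hf0⟩ := not_forall.1 this
    set f : Module.Dual F W := (f0 ℓ')⁻¹ • f0 with hfdef
    have hf : f ℓ' = 1 := by simp [hfdef, inv_mul_cancel₀ hf0]
    -- contraction map  V ⊗ W → V,  a ⊗ b ↦ f b • a
    set L : V ⊗[F] W →ₗ[F] V := TensorProduct.lift (((LinearMap.lsmul F V).comp f).flip) with hL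
    have hLtmul : ∀ (a : V) (b : W), L (a ⊗ₜ[F] b) = f b • a := by
      intro a b; simp [hL]
    have key : f (ρW g ℓ') • (ρV g ℓ) = ℓ := by
      have := congrArg L hg
      rw [TensorProduct.map_tmul, hLtmul, hLtmul, hf, one_smul] at this
      exact this
    have ht : f (ρW g ℓ') ≠ 0 := by
      intro h0
      rw [h0, zero_smul] at key
      exact hℓ key.symm
    refine (hH g).2 ⟨(Units.mk0 _ ht)⁻¹, ?_⟩
    have : ρV g ℓ = (f (ρW g ℓ'))⁻¹ • ℓ := by
      conv_rhs => rw [← key]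
      rw [smul_smul, inv_mul_cancel₀ ht, one_smul]
    simpa using this
  · intro hg
    have h1 := hχ ⟨g, hg⟩
    have h2 := hχ' ⟨g, hg⟩
    rw [TensorProduct.map_tmul, h1, h2, TensorProduct.smul_tmul, smul_smul]
    simp
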